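/- Let G be a finite interval graph with no universal vertex, let M̄ be a maximum antimatching of G with |M̄| = m ≥ 1, and let K = V(G) ∖ V(M̄). Suppose moreover that every equivalence class of the relation on K identifying vertices with the same neighborhood inside V(M̄) has at most m vertices. Then |V(G)| ≤ m³ + m² + m. -/

import Mathlib

open Finset

/-- A finset of vertices is independent (stable) in `G`. -/
def IndepSet {V : Type*} (G : SimpleGraph V) (S : Finset V) : Prop :=
  ∀ u ∈ S, ∀ v ∈ S, ¬ G.Adj u v

/-- A proper coloring of the subgraph of `G` induced by `A`:
a partition of `A` into independent sets (the color classes). -/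
def IsProperColoring {V : Type*} [DecidableEq V] (G : SimpleGraph V) {A : Finset V}
    (P : Finpartition A) : Prop :=
  ∀ S ∈ P.parts, IndepSet G S

/-- The weight of a coloring: the sum over color classes of the maximum weight in the class. -/
def colWeight {V : Type*} [DecidableEq V] {A : Finset V} (w : V → ℕ) (P : Finpartition A) : ℕ :=
  ∑ S ∈ P.parts, S.sup w

/-- The weighted chromatic number of the subgraph of `G` induced by the vertex set `A`. -/
noncomputable def sigmaOn {V : Type*} [DecidableEq V] (G : SimpleGraph V) (w : V → ℕ)
    (A : Finset V) : ℕ :=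
  sInf { n | ∃ P : Finpartition A, IsProperColoring G P ∧ n = colWeight w P }

/-- The weighted chromatic number `σ(G,w)`. -/
noncomputable def sigmaW {V : Type*} [Fintype V] [DecidableEq V] (G : SimpleGraph V)
    (w : V → ℕ) : ℕ :=
  sigmaOn G w Finset.univ

/-- An antimatching of `G`: a set of pairwise disjoint unordered pairs of distinct
non-adjacent vertices of `G` (equivalently, a matching of the complement of `G`). -/
def IsAntimatching {V : Type*} (G : SimpleGraph V) (M : Finset (Sym2 V)) : Prop :=
  (∀ e ∈ M, e ∈ Gᶜ.edgeSet) ∧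
  ∀ e ∈ M, ∀ f ∈ M, e ≠ f → ∀ x, x ∈ e → x ∉ f

/-- A maximum antimatching of `G`. -/
def IsMaxAntimatching {V : Type*} (G : SimpleGraph V) (M : Finset (Sym2 V)) : Prop :=
  IsAntimatching G M ∧ ∀ M' : Finset (Sym2 V), IsAntimatching G M' → M'.card ≤ M.card

/-- The set `V(M̄)` of vertices covered by the pairs of `M`. -/
def coveredVerts {V : Type*} [Fintype V] [DecidableEq V] (M : Finset (Sym2 V)) : Finset V :=
  Finset.univ.filter fun v => ∃ e ∈ M, v ∈ e

/-- `G` is an interval graph: vertices can be assigned nonempty closed real intervals so that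
two distinct vertices are adjacent iff their intervals intersect. -/
def IsIntervalGraph {V : Type*} (G : SimpleGraph V) : Prop :=
  ∃ f : V → ℝ × ℝ, (∀ v, (f v).1 ≤ (f v).2) ∧
    ∀ u v : V, G.Adj u v ↔
      u ≠ v ∧ (Set.Icc (f u).1 (f u).2 ∩ Set.Icc (f v).1 (f v).2).Nonempty

/- ### Auxiliary lemmas -/

lemma sym2_ex {α : Type*} (e : Sym2 α) : ∃ a b, e = s(a, b) := by
  induction e using Sym2.ind with | _ a b => exact ⟨a, b, rfl⟩

lemma sym2_eq_of_mem {α : Type*} {e : Sym2 α} {x y : α} (hx : x ∈ e) (hy : y ∈ e)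
    (hxy : x ≠ y) : e = s(x, y) := by
  obtain ⟨a, b, rfl⟩ := sym2_ex e
  rw [Sym2.mem_iff] at hx hy
  rcases hx with rfl | rfl <;> rcases hy with rfl | rfl
  · exact absurd rfl hxy
  · rfl
  · exact Sym2.eq_swap
  · exact absurd rfl hxy

lemma mem_covered {V : Type*} [Fintype V] [DecidableEq V] {M : Finset (Sym2 V)} {v : V} :
    v ∈ coveredVerts M ↔ ∃ e ∈ M, v ∈ e := by
  simp [coveredVerts]

/-- The key exchange lemma: two distinct uncovered vertices cannot miss the two
endpoints of a pair of a maximum antimatching. -/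
lemma exchange_lemma {V : Type*} [Fintype V] [DecidableEq V] {G : SimpleGraph V}
    {M : Finset (Sym2 V)} (hM : IsMaxAntimatching G M)
    {u w a b : V} (hu : u ∉ coveredVerts M) (hw : w ∉ coveredVerts M)
    (huw : u ≠ w) (he : s(a, b) ∈ M)
    (hua : ¬ G.Adj u a) (hwb : ¬ G.Adj w b) : False := by
  obtain ⟨⟨hMc, hMd⟩, hmax⟩ := hM
  have hab : a ≠ b := by
    have h := hMc _ he
    rw [SimpleGraph.mem_edgeSet, SimpleGraph.compl_adj] at h
    exact h.1
  have hacov : a ∈ coveredVerts M := mem_covered.mpr ⟨_, he, by simp⟩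
  have hbcov : b ∈ coveredVerts M := mem_covered.mpr ⟨_, he, by simp⟩
  have hua' : u ≠ a := fun h => hu (h ▸ hacov)
  have hub' : u ≠ b := fun h => hu (h ▸ hbcov)
  have hwa' : w ≠ a := fun h => hw (h ▸ hacov)
  have hwb' : w ≠ b := fun h => hw (h ▸ hbcov)
  -- u and w are not in any edge of M
  have hunotin : ∀ e ∈ M, u ∉ e := fun e heM hmem => hu (mem_covered.mpr ⟨e, heM, hmem⟩)
  have hwnotin : ∀ e ∈ M, w ∉ e := fun e heM hmem => hw (mem_covered.mpr ⟨e, heM, hmem⟩)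
  set M' : Finset (Sym2 V) := insert s(u, a) (insert s(w, b) (M.erase s(a, b))) with hM'
  have hne1 : s(u, a) ≠ s(w, b) := by
    intro h
    rw [Sym2.eq_iff] at h
    rcases h with ⟨rfl, rfl⟩ | ⟨rfl, rfl⟩
    · exact huw rfl
    · exact hub' rfl
  have hnotin1 : s(u, a) ∉ M.erase s(a, b) := fun h =>
    hunotin _ (mem_of_mem_erase h) (by simp)
  have hnotin2 : s(w, b) ∉ M.erase s(a, b) := fun h =>
    hwnotin _ (mem_of_mem_erase h) (by simp)
  have hnotin0 : s(u, a) ∉ insert s(w, b) (M.erase s(a, b)) := by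
    simp only [mem_insert]
    rintro (h | h)
    · exact hne1 h
    · exact hnotin1 h
  have hcard : M'.card = M.card + 1 := by
    rw [hM', card_insert_of_notMem hnotin0, card_insert_of_notMem hnotin2,
      card_erase_of_mem he]
    have hpos : 0 < M.card := card_pos.mpr ⟨_, he⟩
    omega
  have hanti : IsAntimatching G M' := by
    constructor
    · intro e heM'
      rw [hM', mem_insert, mem_insert] at heM'
      rcases heM' with rfl | rfl | h
      · rw [SimpleGraph.mem_edgeSet, SimpleGraph.compl_adj]; exact ⟨hua', hua⟩
      · rw [SimpleGraph.mem_edgeSet, SimpleGraph.compl_adj]; exact ⟨hwb', hwb⟩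
      · exact hMc _ (mem_of_mem_erase h)
    · intro e heM' f hfM' hef x hxe
      rw [hM', mem_insert, mem_insert] at heM' hfM'
      rcases heM' with rfl | rfl | hee <;> rcases hfM' with rfl | rfl | hff
      · exact absurd rfl hef
      · -- e = s(u,a), f = s(w,b)
        rw [Sym2.mem_iff] at hxe ⊢
        push_neg
        rcases hxe with rfl | rfl
        · exact ⟨huw, hub'⟩
        · exact ⟨fun h => hwa' h.symm, hab⟩
      · -- e = s(u,a), f ∈ erase
        rw [Sym2.mem_iff] at hxe
        rcases hxe with rfl | rfl
        · exact hunotin _ (mem_of_mem_erase hff)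
        · intro hxa
          exact hMd _ he _ (mem_of_mem_erase hff) (Ne.symm (ne_of_mem_erase hff)) x
            (by simp) hxa
      · -- e = s(w,b), f = s(u,a)
        rw [Sym2.mem_iff] at hxe ⊢
        push_neg
        rcases hxe with rfl | rfl
        · exact ⟨fun h => huw h.symm, fun h => hwa' h⟩
        · exact ⟨fun h => hub' h.symm, fun h => hab h.symm⟩
      · exact absurd rfl hef
      · rw [Sym2.mem_iff] at hxe
        rcases hxe with rfl | rfl
        · exact hwnotin _ (mem_of_mem_erase hff)
        · intro hxb
          exact hMd _ he _ (mem_of_mem_erase hff) (Ne.symm (ne_of_mem_erase hff)) x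
            (by simp) hxb
      · -- e ∈ erase, f = s(u,a)
        rw [Sym2.mem_iff]
        push_neg
        constructor
        · intro h; subst h; exact hunotin _ (mem_of_mem_erase hee) hxe
        · intro h; subst h
          exact hMd _ (mem_of_mem_erase hee) _ he (ne_of_mem_erase hee) x hxe (by simp)
      · rw [Sym2.mem_iff]
        push_neg
        constructor
        · intro h; subst h; exact hwnotin _ (mem_of_mem_erase hee) hxe
        · intro h; subst h
          exact hMd _ (mem_of_mem_erase hee) _ he (ne_of_mem_erase hee) x hxe (by simp)
      · exact hMd _ (mem_of_mem_erase hee) _ (mem_of_mem_erase hff) hef x hxe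
  have := hmax M' hanti
  omega

/-- Adding a new non-adjacent uncovered pair contradicts maximality: the kernel is a clique. -/
lemma kernel_clique {V : Type*} [Fintype V] [DecidableEq V] {G : SimpleGraph V}
    {M : Finset (Sym2 V)} (hM : IsMaxAntimatching G M)
    {u w : V} (hu : u ∉ coveredVerts M) (hw : w ∉ coveredVerts M)
    (huw : u ≠ w) : G.Adj u w := by
  by_contra hadj
  obtain ⟨⟨hMc, hMd⟩, hmax⟩ := hM
  have hunotin : ∀ e ∈ M, u ∉ e := fun e heM hmem => hu (mem_covered.mpr ⟨e, heM, hmem⟩)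
  have hwnotin : ∀ e ∈ M, w ∉ e := fun e heM hmem => hw (mem_covered.mpr ⟨e, heM, hmem⟩)
  have hnotin : s(u, w) ∉ M := fun h => hunotin _ h (by simp)
  have hanti : IsAntimatching G (insert s(u, w) M) := by
    constructor
    · intro e heM'
      rw [mem_insert] at heM'
      rcases heM' with rfl | h
      · rw [SimpleGraph.mem_edgeSet, SimpleGraph.compl_adj]; exact ⟨huw, hadj⟩
      · exact hMc _ h
    · intro e heM' f hfM' hef x hxe
      rw [mem_insert] at heM' hfM'
      rcases heM' with rfl | hee <;> rcases hfM' with rfl | hff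
      · exact absurd rfl hef
      · rw [Sym2.mem_iff] at hxe
        rcases hxe with rfl | rfl
        · exact hunotin _ hff
        · exact hwnotin _ hff
      · rw [Sym2.mem_iff]
        push_neg
        exact ⟨fun h => hunotin _ hee (h ▸ hxe), fun h => hwnotin _ hee (h ▸ hxe)⟩
      · exact hMd _ hee _ hff hef x hxe
  have := hmax _ hanti
  rw [card_insert_of_notMem hnotin] at this
  omega

lemma arith_aux (a b s m : ℕ) (h : a + b + s ≤ m) (hm : 2 ≤ m) :
    (a + 1) * (b + 1) + s + 1 ≤ m ^ 2 + m := by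
  nlinarith [sq_nonneg (a - b : ℤ), sq_nonneg ((m : ℤ) - a - b)]

/-- an interval graph with no universal vertex, a maximum antimatching with
`m ≥ 1` pairs, and all neighborhood classes of `K = V(G) ∖ V(M̄)` of size at most `m`,
has at most `m³ + m² + m` vertices. -/
theorem interval_kernel_size_bound
    {V : Type*} [Fintype V] [DecidableEq V] (G : SimpleGraph V) [DecidableRel G.Adj]
    (hint : IsIntervalGraph G)
    (hnouniv : ¬ ∃ u : V, ∀ v : V, v ≠ u → G.Adj u v)
    (M : Finset (Sym2 V)) (hM : IsMaxAntimatching G M)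
    (m : ℕ) (hm : M.card = m) (hm1 : 1 ≤ m)
    (K : Finset V) (hK : K = Finset.univ \ coveredVerts M)
    (hclass : ∀ u ∈ K,
      (K.filter fun v => ∀ x ∈ coveredVerts M, (G.Adj v x ↔ G.Adj u x)).card ≤ m) :
    Fintype.card V ≤ m ^ 3 + m ^ 2 + m := by
  classical
  obtain ⟨f, hf1, hadj⟩ := hint
  set cov := coveredVerts M with hcovdef
  have hKmem : ∀ v : V, v ∈ K ↔ v ∉ cov := by
    intro v; rw [hK]; simp
  -- non-degeneracy of edges of M
  have hMc := hM.1.1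
  have hMd := hM.1.2
  -- cardinality of the covered set
  have hcovcard : cov.card = 2 * m := by
    have hbi : cov = M.biUnion (fun e => univ.filter (· ∈ e)) := by
      ext v
      simp [hcovdef, coveredVerts, mem_biUnion]
    rw [hbi, card_biUnion]
    · have : ∀ e ∈ M, (univ.filter (· ∈ e)).card = 2 := by
        intro e he
        obtain ⟨a, b, rfl⟩ := sym2_ex e
        have hab : a ≠ b := by
          have h := hMc _ he
          rw [SimpleGraph.mem_edgeSet, SimpleGraph.compl_adj] at h
          exact h.1
        have : univ.filter (· ∈ s(a, b)) = {a, b} := by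
          ext v; simp [Sym2.mem_iff]
        rw [this, card_pair hab]
      rw [Finset.sum_congr rfl this, sum_const, smul_eq_mul, hm, mul_comm]
    · intro e he f hf hef
      rw [Function.onFun, Finset.disjoint_left]
      intro x hx hx'
      simp only [mem_filter, mem_univ, true_and] at hx hx'
      exact hMd _ he _ hf hef x hx hx'
  have hcardV : Fintype.card V = K.card + 2 * m := by
    have h1 : K.card = Fintype.card V - cov.card := by
      rw [hK, Finset.card_univ_diff]
    have h2 : cov.card ≤ Fintype.card V := by
      rw [← Finset.card_univ]
      exact card_le_card (subset_univ _)
    omega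
  -- the kernel is a clique
  have hclique : ∀ u ∈ K, ∀ w ∈ K, u ≠ w → G.Adj u w := by
    intro u hu w hw huw
    exact kernel_clique hM ((hKmem u).mp hu) ((hKmem w).mp hw) huw
  -- exchange lemma specialized
  have hexch : ∀ u ∈ K, ∀ w ∈ K, u ≠ w → ∀ a b : V, s(a, b) ∈ M →
      ¬ G.Adj u a → ¬ G.Adj w b → False := by
    intro u hu w hw huw a b he hua hwb
    exact exchange_lemma hM ((hKmem u).mp hu) ((hKmem w).mp hw) huw he hua hwb
  -- interval characterization of adjacency
  have hadj' : ∀ u x : V, u ≠ x →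
      (G.Adj u x ↔ (f u).1 ≤ (f x).2 ∧ (f x).1 ≤ (f u).2) := by
    intro u x hne
    rw [hadj u x]
    constructor
    · rintro ⟨-, y, hy⟩
      simp only [Set.mem_inter_iff, Set.mem_Icc] at hy
      exact ⟨hy.1.1.trans hy.2.2, hy.2.1.trans hy.1.2⟩
    · rintro ⟨h1, h2⟩
      refine ⟨hne, max (f u).1 (f x).1, ?_⟩
      simp only [Set.mem_inter_iff, Set.mem_Icc]
      exact ⟨⟨le_max_left _ _, max_le (hf1 u) h2⟩, ⟨le_max_right _ _, max_le h1 (hf1 x)⟩⟩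
  rcases K.eq_empty_or_nonempty with hKe | hKne
  · rw [hcardV, hKe, card_empty]
    have h3 : m ≤ m ^ 3 := Nat.le_self_pow (by norm_num) m
    have h4 : m ≤ m ^ 2 := Nat.le_self_pow (by norm_num) m
    linarith
  -- the common point of the kernel clique
  set p : ℝ := K.sup' hKne (fun u => (f u).1) with hp
  have hlp : ∀ u ∈ K, (f u).1 ≤ p := by
    intro u hu
    rw [hp]
    exact le_sup' (fun u => (f u).1) hu
  have hpr : ∀ u ∈ K, p ≤ (f u).2 := by
    intro u hu
    rw [hp]
    apply sup'_le
    intro w hw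
    rcases eq_or_ne w u with rfl | hne
    · exact hf1 w
    · exact ((hadj' w u hne).mp (hclique w hw u hu hne)).1
  have hKcov : ∀ u ∈ K, ∀ x ∈ cov, u ≠ x := by
    intro u hu x hx h
    exact (hKmem u).mp hu (h ▸ hx)
  have hadjL : ∀ u ∈ K, ∀ x ∈ cov, (f x).2 < p → (G.Adj u x ↔ (f u).1 ≤ (f x).2) := by
    intro u hu x hx hxp
    rw [hadj' u x (hKcov u hu x hx)]
    constructor
    · exact fun h => h.1
    · intro h
      exact ⟨h, le_trans (hf1 x) (le_trans hxp.le (hpr u hu))⟩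
  have hadjR : ∀ u ∈ K, ∀ x ∈ cov, p < (f x).1 → (G.Adj u x ↔ (f x).1 ≤ (f u).2) := by
    intro u hu x hx hxp
    rw [hadj' u x (hKcov u hu x hx)]
    constructor
    · exact fun h => h.2
    · intro h
      exact ⟨le_trans (hlp u hu) (le_trans hxp.le (hf1 x)), h⟩
  have hadjC : ∀ u ∈ K, ∀ x ∈ cov, (f x).1 ≤ p → p ≤ (f x).2 → G.Adj u x := by
    intro u hu x hx h1 h2
    rw [hadj' u x (hKcov u hu x hx)]
    exact ⟨le_trans (hlp u hu) h2, le_trans h1 (hpr u hu)⟩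
  -- neighborhoods in the covered set
  set nbh : V → Finset V := fun u => cov.filter (fun x => G.Adj u x) with hnbh
  have hnbh_mem : ∀ u x, x ∈ nbh u ↔ x ∈ cov ∧ G.Adj u x := by
    intro u x
    simp [hnbh]
  have hfiber : ∀ u ∈ K, (K.filter (fun v => nbh v = nbh u)).card ≤ m := by
    intro u hu
    refine le_trans (card_le_card ?_) (hclass u hu)
    intro v hv
    rw [mem_filter] at hv ⊢
    refine ⟨hv.1, fun x hx => ?_⟩
    constructor
    · intro h
      have hxv : x ∈ nbh v := (hnbh_mem v x).mpr ⟨hx, h⟩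
      rw [hv.2] at hxv
      exact ((hnbh_mem u x).mp hxv).2
    · intro h
      have hxu : x ∈ nbh u := (hnbh_mem u x).mpr ⟨hx, h⟩
      rw [← hv.2] at hxu
      exact ((hnbh_mem v x).mp hxu).2
  have hKcard : K.card ≤ m * (K.image nbh).card := by
    rw [Finset.card_eq_sum_card_image nbh K]
    calc ∑ b ∈ K.image nbh, (K.filter fun a => nbh a = b).card
        ≤ ∑ _b ∈ K.image nbh, m := by
          apply sum_le_sum
          intro b hb
          obtain ⟨u, hu, rfl⟩ := mem_image.mp hb
          exact hfiber u hu
      _ = m * (K.image nbh).card := by rw [sum_const, smul_eq_mul, mul_comm]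
  rcases eq_or_lt_of_le hm1 with hm1' | hm2
  · -- CASE m = 1
    obtain ⟨e, hMe⟩ := Finset.card_eq_one.mp (hm.trans hm1'.symm)
    obtain ⟨a, b, rfl⟩ := sym2_ex e
    have heM : s(a, b) ∈ M := hMe ▸ Finset.mem_singleton_self _
    have hcovab : cov = {a, b} := by
      ext v
      rw [hcovdef, mem_covered, hMe]
      simp [Sym2.mem_iff]
    have huniv : ∀ v ∈ K, G.Adj v a → G.Adj v b → False := by
      intro v hv hva hvb
      apply hnouniv
      refine ⟨v, fun y hy => ?_⟩
      by_cases hyc : y ∈ cov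
      · rw [hcovab] at hyc
        rcases Finset.mem_insert.mp hyc with rfl | hyb
        · exact hva
        · rw [Finset.mem_singleton.mp hyb]
          exact hvb
      · exact hclique v hv y ((hKmem y).mpr hyc) (Ne.symm hy)
    have hK1 : K.card ≤ 1 := by
      by_contra hgt
      push_neg at hgt
      obtain ⟨u, hu, w, hw, huw⟩ := Finset.one_lt_card.mp hgt
      have hsame : nbh u ≠ nbh w := by
        intro h
        have h2 := hfiber u hu
        have hsub : {u, w} ⊆ K.filter (fun v => nbh v = nbh u) := by
          intro y hy
          rcases Finset.mem_insert.mp hy with rfl | hy'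
          · rw [mem_filter]; exact ⟨hu, rfl⟩
          · rw [Finset.mem_singleton.mp hy', mem_filter]; exact ⟨hw, h.symm⟩
        have h3 := card_le_card hsub
        rw [card_pair huw] at h3
        omega
      have hsame' : (∀ x ∈ cov, (G.Adj u x ↔ G.Adj w x)) → False := by
        intro hiff
        apply hsame
        ext x
        rw [hnbh_mem, hnbh_mem]
        constructor
        · rintro ⟨hx, h⟩; exact ⟨hx, (hiff x hx).mp h⟩
        · rintro ⟨hx, h⟩; exact ⟨hx, (hiff x hx).mpr h⟩
      by_cases hua : G.Adj u a <;> by_cases hub : G.Adj u b <;>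
        by_cases hwa : G.Adj w a <;> by_cases hwb : G.Adj w b
      all_goals first
        | exact huniv u hu hua hub
        | exact huniv w hw hwa hwb
        | exact hexch u hu w hw huw a b heM hua hwb
        | exact hexch w hw u hu (Ne.symm huw) a b heM hwa hub
        | exact hsame' (by
            intro x hx
            rw [hcovab, mem_insert, mem_singleton] at hx
            rcases hx with rfl | rfl <;> tauto)
    rw [hcardV, ← hm1']
    norm_num
    omega
  · -- CASE m ≥ 2
    set T : Finset V := cov.filter (fun x => ∃ u ∈ K, ¬ G.Adj u x) with hT
    have hTsub : T ⊆ cov := filter_subset _ _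
    have hTside : ∀ x ∈ T, (f x).2 < p ∨ p < (f x).1 := by
      intro x hx
      rw [hT, mem_filter] at hx
      obtain ⟨hxc, u, hu, hux⟩ := hx
      by_contra hcon
      push_neg at hcon
      exact hux (hadjC u hu x hxc hcon.2 hcon.1)
    set Ms : Finset (Sym2 V) := M.filter (fun e => ∀ x ∈ e, x ∈ T) with hMs
    set U : Finset V := K.filter
      (fun u => ∃ a b : V, s(a, b) ∈ M ∧ a ∈ T ∧ b ∈ T ∧ ¬ G.Adj u a) with hU
    have hUsub : U ⊆ K := filter_subset _ _
    have hUcard : U.card ≤ Ms.card := by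
      by_contra hlt
      push_neg at hlt
      set pick : V → Sym2 V := fun u =>
        if h : ∃ a b : V, s(a, b) ∈ M ∧ a ∈ T ∧ b ∈ T ∧ ¬ G.Adj u a then
          s(h.choose, h.choose_spec.choose) else s(u, u) with hpick
      have hpick_spec : ∀ u ∈ U, ∃ a b : V, pick u = s(a, b) ∧ s(a, b) ∈ M ∧
          a ∈ T ∧ b ∈ T ∧ ¬ G.Adj u a := by
        intro u hu
        rw [hU, mem_filter] at hu
        have h := hu.2
        refine ⟨h.choose, h.choose_spec.choose, ?_, h.choose_spec.choose_spec⟩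
        simp only [hpick]
        rw [dif_pos h]
      have hmaps : ∀ u ∈ U, pick u ∈ Ms := by
        intro u hu
        obtain ⟨a, b, hpe, heM, haT, hbT, hua⟩ := hpick_spec u hu
        rw [hpe, hMs, mem_filter]
        refine ⟨heM, fun x hxe => ?_⟩
        rw [Sym2.mem_iff] at hxe
        rcases hxe with rfl | rfl
        · exact haT
        · exact hbT
      obtain ⟨u, hu, u', hu', hne, heq⟩ :=
        Finset.exists_ne_map_eq_of_card_lt_of_maps_to hlt hmaps
      obtain ⟨a, b, hpe, heM, haT, hbT, hua⟩ := hpick_spec u hu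
      obtain ⟨a', b', hpe', heM', haT', hbT', hua'⟩ := hpick_spec u' hu'
      have huK := hUsub hu
      have hu'K := hUsub hu'
      have heq2 : s(a, b) = s(a', b') := by rw [← hpe, ← hpe', heq]
      rw [Sym2.eq_iff] at heq2
      rcases heq2 with ⟨rfl, rfl⟩ | ⟨rfl, rfl⟩
      · -- both u and u' miss a; take a witness missing b
        rw [hT, mem_filter] at hbT
        obtain ⟨hbc, w, hw, hwb⟩ := hbT
        rcases eq_or_ne w u with rfl | hwu
        · exact hexch u' hu'K w huK (Ne.symm hne) a b heM hua' hwb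
        · exact hexch u huK w hw (Ne.symm hwu) a b heM hua hwb
      · exact hexch u huK u' hu'K hne a b heM hua hua'
    -- T' : distinguishing vertices not covered by pairs in Ms
    set T' : Finset V := T.filter (fun x => ∀ e ∈ Ms, x ∉ e) with hT''
    have hT'sub : T' ⊆ T := filter_subset _ _
    have htcard : T'.card + Ms.card ≤ m := by
      set pick2 : V → Sym2 V := fun x =>
        if h : ∃ e ∈ M, x ∈ e then h.choose else s(x, x) with hpick2
      have hpick2_spec : ∀ x ∈ T', pick2 x ∈ M ∧ x ∈ pick2 x := by
        intro x hx
        have hxc : x ∈ cov := hTsub (hT'sub hx)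
        have h : ∃ e ∈ M, x ∈ e := mem_covered.mp hxc
        have : pick2 x = h.choose := by
          simp only [hpick2]
          rw [dif_pos h]
        rw [this]
        exact h.choose_spec
      have hmaps2 : ∀ x ∈ T', pick2 x ∈ M \ Ms := by
        intro x hx
        obtain ⟨h1, h2⟩ := hpick2_spec x hx
        rw [mem_sdiff]
        refine ⟨h1, fun hMs' => ?_⟩
        have hforall := (mem_filter.mp hx).2
        exact hforall _ hMs' h2
      have hinj2 : Set.InjOn pick2 T' := by
        intro x hx y hy hxy
        rw [Finset.mem_coe] at hx hy
        by_contra hne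
        obtain ⟨h1, h2⟩ := hpick2_spec x hx
        obtain ⟨h1', h2'⟩ := hpick2_spec y hy
        rw [← hxy] at h2'
        have he : pick2 x = s(x, y) := sym2_eq_of_mem h2 h2' hne
        have hMsx : pick2 x ∈ Ms := by
          rw [hMs, mem_filter]
          refine ⟨h1, fun z hz => ?_⟩
          rw [he, Sym2.mem_iff] at hz
          rcases hz with rfl | rfl
          · exact hT'sub hx
          · exact hT'sub hy
        exact (mem_filter.mp hx).2 _ hMsx h2
      have h3 : T'.card ≤ (M \ Ms).card :=
        Finset.card_le_card_of_injOn pick2 hmaps2 hinj2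
      have h4 : (M \ Ms).card = M.card - Ms.card := card_sdiff_of_subset (filter_subset _ _)
      have h5 : Ms.card ≤ M.card := card_le_card (filter_subset _ _)
      omega
    -- splitting T' into left and right parts
    set TL : Finset V := T'.filter (fun x => (f x).2 < p) with hTL
    set TR : Finset V := T'.filter (fun x => p < (f x).1) with hTR
    have hTLprop : ∀ x ∈ TL, x ∈ cov ∧ (f x).2 < p := by
      intro x hx
      rw [hTL, mem_filter] at hx
      exact ⟨hTsub (hT'sub hx.1), hx.2⟩
    have hTRprop : ∀ x ∈ TR, x ∈ cov ∧ p < (f x).1 := by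
      intro x hx
      rw [hTR, mem_filter] at hx
      exact ⟨hTsub (hT'sub hx.1), hx.2⟩
    have hsplit : TL.card + TR.card = T'.card := by
      have hTLsub : TL ⊆ T' := filter_subset _ _
      have hdiff : T' \ TL = TR := by
        ext x
        simp only [hTL, hTR, mem_sdiff, mem_filter, not_and, not_lt]
        constructor
        · rintro ⟨hx, hnx⟩
          refine ⟨hx, ?_⟩
          rcases hTside x (hT'sub hx) with h | h
          · exact absurd h (not_lt.mpr (hnx hx))
          · exact h
        · rintro ⟨hx, hpx⟩
          exact ⟨hx, fun _ => le_trans (le_of_lt hpx) (hf1 x)⟩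
      have := Finset.card_sdiff_add_card_eq_card hTLsub
      rw [hdiff] at this
      omega
    -- non-neighbour sets inside TL and TR are determined by interval endpoints
    have hA : ∀ u ∈ K, TL.filter (fun x => x ∉ nbh u)
        = TL.filter (fun x => (f x).2 < (f u).1) := by
      intro u hu
      apply filter_congr
      intro x hx
      obtain ⟨hxc, hxp⟩ := hTLprop x hx
      simp only [hnbh_mem, hxc, true_and, hadjL u hu x hxc hxp, not_le]
    have hB : ∀ u ∈ K, TR.filter (fun x => x ∉ nbh u)
        = TR.filter (fun x => (f u).2 < (f x).1) := by
      intro u hu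
      apply filter_congr
      intro x hx
      obtain ⟨hxc, hxp⟩ := hTRprop x hx
      simp only [hnbh_mem, hxc, true_and, hadjR u hu x hxc hxp, not_le]
    set Φ : Finset V → ℕ × ℕ := fun N =>
      ((TL.filter (fun x => x ∉ N)).card, (TR.filter (fun x => x ∉ N)).card) with hΦ
    -- main determination lemma
    have hdet : ∀ u ∈ K \ U, ∀ u' ∈ K \ U, Φ (nbh u) = Φ (nbh u') → nbh u = nbh u' := by
      intro u hu0 u' hu0' hΦeq
      have hu : u ∈ K := (mem_sdiff.mp hu0).1
      have hu' : u' ∈ K := (mem_sdiff.mp hu0').1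
      have hUu : u ∉ U := (mem_sdiff.mp hu0).2
      have hUu' : u' ∉ U := (mem_sdiff.mp hu0').2
      have hAcard : (TL.filter (fun x => (f x).2 < (f u).1)).card
          = (TL.filter (fun x => (f x).2 < (f u').1)).card := by
        have h1 := congrArg Prod.fst hΦeq
        simp only [hΦ] at h1
        rw [hA u hu, hA u' hu'] at h1
        exact h1
      have hBcard : (TR.filter (fun x => (f u).2 < (f x).1)).card
          = (TR.filter (fun x => (f u').2 < (f x).1)).card := by
        have h1 := congrArg Prod.snd hΦeq
        simp only [hΦ] at h1
        rw [hB u hu, hB u' hu'] at h1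
        exact h1
      have hAeq : TL.filter (fun x => (f x).2 < (f u).1)
          = TL.filter (fun x => (f x).2 < (f u').1) := by
        rcases le_total (f u).1 (f u').1 with h | h
        · apply eq_of_subset_of_card_le
          · intro x hx
            rw [mem_filter] at hx ⊢
            exact ⟨hx.1, lt_of_lt_of_le hx.2 h⟩
          · exact le_of_eq hAcard.symm
        · symm
          apply eq_of_subset_of_card_le
          · intro x hx
            rw [mem_filter] at hx ⊢
            exact ⟨hx.1, lt_of_lt_of_le hx.2 h⟩
          · exact le_of_eq hAcard
      have hBeq : TR.filter (fun x => (f u).2 < (f x).1)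
          = TR.filter (fun x => (f u').2 < (f x).1) := by
        rcases le_total (f u).2 (f u').2 with h | h
        · symm
          apply eq_of_subset_of_card_le
          · intro x hx
            rw [mem_filter] at hx ⊢
            exact ⟨hx.1, lt_of_le_of_lt h hx.2⟩
          · exact le_of_eq hBcard
        · apply eq_of_subset_of_card_le
          · intro x hx
            rw [mem_filter] at hx ⊢
            exact ⟨hx.1, lt_of_le_of_lt h hx.2⟩
          · exact le_of_eq hBcard.symm
      ext x
      rw [hnbh_mem, hnbh_mem]
      by_cases hxc : x ∈ cov
      · have hiff : G.Adj u x ↔ G.Adj u' x := by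
          by_cases hxT : x ∈ T
          · by_cases hxT' : x ∈ T'
            · have hLR : x ∈ TL ∨ x ∈ TR := by
                rcases hTside x hxT with h | h
                · left; rw [hTL, mem_filter]; exact ⟨hxT', h⟩
                · right; rw [hTR, mem_filter]; exact ⟨hxT', h⟩
              rcases hLR with hxL | hxR
              · have hL : (f x).2 < p := (hTLprop x hxL).2
                have hx1 : x ∈ TL.filter (fun y => (f y).2 < (f u).1)
                    ↔ x ∈ TL.filter (fun y => (f y).2 < (f u').1) := by rw [hAeq]
                simp only [mem_filter] at hx1
                rw [hadjL u hu x hxc hL, hadjL u' hu' x hxc hL]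
                constructor
                · intro h
                  by_contra hcon
                  push_neg at hcon
                  exact absurd h (not_le.mpr (hx1.mpr ⟨hxL, hcon⟩).2)
                · intro h
                  by_contra hcon
                  push_neg at hcon
                  exact absurd h (not_le.mpr (hx1.mp ⟨hxL, hcon⟩).2)
              · have hR : p < (f x).1 := (hTRprop x hxR).2
                have hx1 : x ∈ TR.filter (fun y => (f u).2 < (f y).1)
                    ↔ x ∈ TR.filter (fun y => (f u').2 < (f y).1) := by rw [hBeq]
                simp only [mem_filter] at hx1
                rw [hadjR u hu x hxc hR, hadjR u' hu' x hxc hR]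
                constructor
                · intro h
                  by_contra hcon
                  push_neg at hcon
                  exact absurd h (not_le.mpr (hx1.mpr ⟨hxR, hcon⟩).2)
                · intro h
                  by_contra hcon
                  push_neg at hcon
                  exact absurd h (not_le.mpr (hx1.mp ⟨hxR, hcon⟩).2)
            · -- x is covered by a pair of Ms : everyone outside U is adjacent to x
              rw [hT'', mem_filter] at hxT'
              push_neg at hxT'
              obtain ⟨e, heMs, hxe⟩ := hxT' hxT
              obtain ⟨a, b, rfl⟩ := sym2_ex e
              rw [hMs, mem_filter] at heMs
              obtain ⟨heM, hTab⟩ := heMs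
              have hadjall : ∀ v, v ∈ K → v ∉ U → G.Adj v x := by
                intro v hv hvU
                by_contra hvx
                apply hvU
                rw [hU, mem_filter]
                refine ⟨hv, ?_⟩
                rw [Sym2.mem_iff] at hxe
                rcases hxe with rfl | rfl
                · exact ⟨x, b, heM, hTab _ (by simp), hTab _ (by simp), hvx⟩
                · refine ⟨x, a, ?_, hTab _ (by simp), hTab _ (by simp), hvx⟩
                  rw [Sym2.eq_swap]
                  exact heM
              simp [hadjall u hu hUu, hadjall u' hu' hUu']
          · -- x is adjacent to every kernel vertex
            have hall : ∀ v ∈ K, G.Adj v x := by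
              intro v hv
              by_contra hvx
              apply hxT
              rw [hT, mem_filter]
              exact ⟨hxc, v, hv, hvx⟩
            simp [hall u hu, hall u' hu']
        rw [hiff]
      · simp [hxc]
    -- counting the neighbourhood classes
    have himg1 : ((K \ U).image nbh).card ≤ (TL.card + 1) * (TR.card + 1) := by
      have hmapsΦ : ∀ N ∈ (K \ U).image nbh,
          Φ N ∈ (range (TL.card + 1)) ×ˢ (range (TR.card + 1)) := by
        intro N _
        rw [mem_product, mem_range, mem_range]
        constructor
        · simp only [hΦ]
          exact Nat.lt_succ_of_le (card_filter_le _ _)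
        · simp only [hΦ]
          exact Nat.lt_succ_of_le (card_filter_le _ _)
      have hinjΦ : Set.InjOn Φ ((K \ U).image nbh) := by
        intro N hN N' hN' heq
        rw [Finset.mem_coe, mem_image] at hN hN'
        obtain ⟨u, hu, rfl⟩ := hN
        obtain ⟨u', hu', rfl⟩ := hN'
        exact hdet u hu u' hu' heq
      calc ((K \ U).image nbh).card
          ≤ ((range (TL.card + 1)) ×ˢ (range (TR.card + 1))).card :=
            Finset.card_le_card_of_injOn Φ hmapsΦ hinjΦ
        _ = (TL.card + 1) * (TR.card + 1) := by rw [card_product, card_range, card_range]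
    have himg : (K.image nbh).card ≤ (TL.card + 1) * (TR.card + 1) + Ms.card := by
      have hsubU : K.image nbh ⊆ (K \ U).image nbh ∪ U.image nbh := by
        intro N hN
        rw [mem_image] at hN
        obtain ⟨u, hu, rfl⟩ := hN
        rw [mem_union]
        by_cases hUu : u ∈ U
        · right; exact mem_image_of_mem _ hUu
        · left; exact mem_image_of_mem _ (mem_sdiff.mpr ⟨hu, hUu⟩)
      calc (K.image nbh).card ≤ ((K \ U).image nbh ∪ U.image nbh).card :=
            card_le_card hsubU
        _ ≤ ((K \ U).image nbh).card + (U.image nbh).card := card_union_le _ _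
        _ ≤ (TL.card + 1) * (TR.card + 1) + Ms.card :=
            Nat.add_le_add himg1 (le_trans card_image_le hUcard)
    have hfin : (K.image nbh).card + 1 ≤ m ^ 2 + m := by
      have h := arith_aux TL.card TR.card Ms.card m (by omega) hm2
      linarith
    have hKm : K.card + m ≤ m * (m ^ 2 + m) := by
      calc K.card + m ≤ m * (K.image nbh).card + m * 1 := by
            rw [mul_one]
            exact Nat.add_le_add_right hKcard m
        _ = m * ((K.image nbh).card + 1) := by ring
        _ ≤ m * (m ^ 2 + m) := Nat.mul_le_mul_left _ hfin
    have hring : m * (m ^ 2 + m) = m ^ 3 + m ^ 2 := by ring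
    rw [hcardV]
    linarith
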